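/- Let F, k : [a,b] → ℝ-valued data be of bounded variation, where F : [a,b] → K(ℝ^d) is a set-valued function with compact values and k : [a,b] → ℝ. For any partition χ = {a = x_0 < ⋯ < x_n = b}, the Hausdorff distance between the right weighted metric Riemann sum ⊕_{i=0}^{n−1}(x_{i+1}−x_i)k(x_{i+1})F(x_{i+1}) and the left weighted metric Riemann sum ⊕_{i=0}^{n−1}(x_{i+1}−x_i)k(x_i)F(x_i) is at most |χ|(‖k‖_∞ V_a^b(F) + ‖F‖_∞ V_a^b(k)), where |χ| is the mesh of the partition. -/

import Mathlib

open Set Filter Topology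

/-- `(p,q)` is a metric pair of `(A,B)`: `p ∈ A`, `q ∈ B` and `p` is a projection of
`q` on `A` or `q` is a projection of `p` on `B`. -/
def IsMetricPair {E : Type*} [MetricSpace E] (A B : Set E) (p q : E) : Prop :=
  p ∈ A ∧ q ∈ B ∧ (dist q p = Metric.infDist q A ∨ dist p q = Metric.infDist p B)

/-- The metric linear combination `⊕ λ_i A_i` of sets `A_0, …, A_n`:
all sums `Σ λ_i a_i` over metric chains `(a_0, …, a_n)` of `(A_0, …, A_n)`. -/
def metricLinComb {E : Type*} [NormedAddCommGroup E] [NormedSpace ℝ E] [MetricSpace E]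
    {n : ℕ} (lam : Fin (n+1) → ℝ) (A : Fin (n+1) → Set E) : Set E :=
  {z | ∃ y : Fin (n+1) → E, (∀ i, y i ∈ A i) ∧
    (∀ i : Fin n, IsMetricPair (A i.castSucc) (A i.succ) (y i.castSucc) (y i.succ)) ∧
    z = ∑ i, lam i • y i}

lemma IsMetricPair.dist_le_hausdorffDist {E : Type*} [MetricSpace E] {A B : Set E} {p q : E}
    (h : IsMetricPair A B p q) (hfin : EMetric.hausdorffEdist A B ≠ ⊤) :
    dist p q ≤ Metric.hausdorffDist A B := by
  obtain ⟨hp, hq, hd | hd⟩ := h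
  · rw [dist_comm, hd, Metric.hausdorffDist_comm]
    exact Metric.infDist_le_hausdorffDist_of_mem hq (by rwa [EMetric.hausdorffEdist_comm])
  · rw [hd]
    exact Metric.infDist_le_hausdorffDist_of_mem hp hfin

lemma NEC_hausdorffEdist_ne_top {α : Type*} [MetricSpace α]
    (A B : TopologicalSpace.NonemptyCompacts α) :
    EMetric.hausdorffEdist (A : Set α) (B : Set α) ≠ ⊤ :=
  Metric.hausdorffEdist_ne_top_of_nonempty_of_bounded A.nonempty B.nonempty
    A.isCompact.isBounded B.isCompact.isBounded

lemma sum_dist_le_variation {M : Type*} [PseudoMetricSpace M] (f : ℝ → M) {a b : ℝ}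
    (hf : BoundedVariationOn f (Set.Icc a b)) {n : ℕ} (x : Fin (n+2) → ℝ)
    (hmono : Monotone x) (hxa : x 0 = a) (hxb : x (Fin.last (n+1)) = b) (hab : a ≤ b) :
    ∑ i : Fin (n+1), dist (f (x i.castSucc)) (f (x i.succ))
      ≤ (eVariationOn f (Set.Icc a b)).toReal := by
  set u : ℕ → ℝ := fun m => x ⟨min m (n+1), by omega⟩ with hu
  have humono : Monotone u := by
    intro m m' hm
    exact hmono (by simp [Fin.mk_le_mk]; omega)
  have humem : ∀ m, u m ∈ Set.Icc a b := by
    intro m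
    constructor
    · rw [← hxa]; exact hmono (Fin.zero_le _)
    · rw [← hxb]; exact hmono (Fin.le_last _)
  have key := eVariationOn.sum_le (f := f) (n := n+1) humono humem
  have h1 : ∑ i : Fin (n+1), dist (f (x i.castSucc)) (f (x i.succ))
      = (∑ i ∈ Finset.range (n+1), edist (f (u (i+1))) (f (u i))).toReal := by
    rw [ENNReal.toReal_sum (by intro i _; exact (edist_lt_top _ _).ne)]
    rw [← Fin.sum_univ_eq_sum_range]
    refine Finset.sum_congr rfl (fun i _ => ?_)
    have e1 : u ((i : ℕ) + 1) = x i.succ := by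
      simp only [hu]
      congr 1
      apply Fin.ext
      have := i.isLt
      simp only [Fin.val_succ]
      omega
    have e2 : u (i : ℕ) = x i.castSucc := by
      simp only [hu]
      congr 1
      apply Fin.ext
      have := i.isLt
      simp only [Fin.coe_castSucc]
      omega
    rw [e1, e2, dist_edist, edist_comm]
  rw [h1]
  exact ENNReal.toReal_mono hf key

lemma key_right {d n : ℕ}
    (G : Fin (n+2) → TopologicalSpace.NonemptyCompacts (EuclideanSpace ℝ (Fin d)))
    (μ ν : Fin (n+1) → ℝ) (M : ℝ)
    (hM : ∀ j, ∀ p ∈ (G j : Set (EuclideanSpace ℝ (Fin d))), ‖p‖ ≤ M)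
    {z : EuclideanSpace ℝ (Fin d)}
    (hz : z ∈ metricLinComb μ (fun i => (G i.succ : Set (EuclideanSpace ℝ (Fin d))))) :
    Metric.infDist z
        (metricLinComb ν (fun i => (G i.castSucc : Set (EuclideanSpace ℝ (Fin d))))) ≤
      ∑ i, (|μ i| * dist (G i.castSucc) (G i.succ) + |μ i - ν i| * M) := by
  obtain ⟨y, hymem, hychain, rfl⟩ := hz
  simp only at hymem hychain
  obtain ⟨p, hpmem, hpdist⟩ :=
    (G 0).isCompact.exists_infDist_eq_dist (G 0).nonempty (y 0)
  set y' : Fin (n+1) → EuclideanSpace ℝ (Fin d) :=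
    fun i => if h : (i : ℕ) = 0 then p
      else y ⟨(i : ℕ) - 1, lt_of_le_of_lt (Nat.sub_le _ _) i.isLt⟩ with hy'
  have hy'0 : ∀ i : Fin (n+1), (i : ℕ) = 0 → y' i = p := by
    intro i hi; simp only [hy', hi, dif_pos]
  have hy'pos : ∀ (i : Fin (n+1)), (i : ℕ) ≠ 0 →
      y' i = y ⟨(i : ℕ) - 1, lt_of_le_of_lt (Nat.sub_le _ _) i.isLt⟩ := by
    intro i hi; simp only [hy', hi, dif_neg, not_false_iff]
  have hy'mem : ∀ i : Fin (n+1), y' i ∈ (G i.castSucc : Set (EuclideanSpace ℝ (Fin d))) := by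
    intro i
    by_cases hi : (i : ℕ) = 0
    · rw [hy'0 i hi]
      have e : i.castSucc = 0 := by apply Fin.ext; simpa using hi
      rw [e]; exact hpmem
    · rw [hy'pos i hi]
      have e : (⟨(i : ℕ) - 1, lt_of_le_of_lt (Nat.sub_le _ _) i.isLt⟩ : Fin (n+1)).succ
          = i.castSucc := by
        apply Fin.ext; simp only [Fin.val_succ, Fin.coe_castSucc, Fin.val_mk]; omega
      rw [← e]; exact hymem _
  have hpair : ∀ i : Fin (n+1),
      IsMetricPair (G i.castSucc : Set (EuclideanSpace ℝ (Fin d)))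
        (G i.succ : Set (EuclideanSpace ℝ (Fin d))) (y' i) (y i) := by
    intro i
    by_cases hi : (i : ℕ) = 0
    · have e : i = 0 := Fin.ext hi
      subst e
      rw [hy'0 0 rfl]
      refine ⟨by simpa using hpmem, by simpa using hymem 0, Or.inl ?_⟩
      simpa using hpdist.symm
    · have hn : (i : ℕ) - 1 < n := by have := i.isLt; omega
      set j : Fin n := ⟨(i : ℕ) - 1, hn⟩ with hj
      have hc := hychain j
      have e1 : j.castSucc.succ = i.castSucc := by
        apply Fin.ext; simp only [hj, Fin.val_succ, Fin.coe_castSucc, Fin.val_mk]; omega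
      have e2 : j.succ.succ = i.succ := by
        apply Fin.ext; simp only [hj, Fin.val_succ, Fin.val_mk]; omega
      have e3 : j.castSucc
          = (⟨(i : ℕ) - 1, lt_of_le_of_lt (Nat.sub_le _ _) i.isLt⟩ : Fin (n+1)) := by
        apply Fin.ext; simp only [hj, Fin.coe_castSucc, Fin.val_mk]
      have e4 : j.succ = i := by
        apply Fin.ext; simp only [hj, Fin.val_succ, Fin.val_mk]; omega
      rw [e1, e2, e3, e4] at hc
      rw [hy'pos i hi]
      exact hc
  have hsucc : ∀ i : Fin n, y' i.succ = y i.castSucc := by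
    intro i
    rw [hy'pos i.succ (by simp [Fin.val_succ])]
    have e : (⟨((i.succ : Fin (n+1)) : ℕ) - 1,
        lt_of_le_of_lt (Nat.sub_le _ _) (i.succ : Fin (n+1)).isLt⟩ : Fin (n+1))
        = i.castSucc := by
      apply Fin.ext; simp only [Fin.val_succ, Fin.coe_castSucc, Fin.val_mk]; omega
    rw [e]
  have hy'chain : ∀ i : Fin n,
      IsMetricPair (G i.castSucc.castSucc : Set (EuclideanSpace ℝ (Fin d)))
        (G i.succ.castSucc : Set (EuclideanSpace ℝ (Fin d))) (y' i.castSucc) (y' i.succ) := by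
    intro i
    rw [hsucc i]
    by_cases hi : (i : ℕ) = 0
    · have e3 : i.castSucc = (0 : Fin (n+1)) := by
        apply Fin.ext; simp only [Fin.coe_castSucc, Fin.val_zero]; omega
      have e2 : i.succ.castSucc = ((0 : Fin (n+1)).succ : Fin (n+2)) := by
        apply Fin.ext; simp only [Fin.coe_castSucc, Fin.val_succ, Fin.val_zero]; omega
      rw [e3, e2, hy'0 0 rfl]
      exact ⟨by simpa using hpmem, hymem 0, Or.inl (by simpa using hpdist.symm)⟩
    · have hcs : ((i.castSucc : Fin (n+1)) : ℕ) ≠ 0 := by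
        simp only [Fin.coe_castSucc]; exact hi
      have hn : (i : ℕ) - 1 < n := lt_of_le_of_lt (Nat.sub_le _ _) i.isLt
      set j : Fin n := ⟨(i : ℕ) - 1, hn⟩ with hj
      have hc := hychain j
      have e1 : j.castSucc.succ = i.castSucc.castSucc := by
        apply Fin.ext; simp only [hj, Fin.val_succ, Fin.coe_castSucc, Fin.val_mk]; omega
      have e2 : j.succ.succ = i.succ.castSucc := by
        apply Fin.ext; simp only [hj, Fin.val_succ, Fin.coe_castSucc, Fin.val_mk]; omega
      have e3 : j.castSucc = (⟨((i.castSucc : Fin (n+1)) : ℕ) - 1,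
          lt_of_le_of_lt (Nat.sub_le _ _) (i.castSucc : Fin (n+1)).isLt⟩ : Fin (n+1)) := by
        apply Fin.ext; simp only [hj, Fin.coe_castSucc, Fin.val_mk]
      have e4 : j.succ = i.castSucc := by
        apply Fin.ext; simp only [hj, Fin.val_succ, Fin.coe_castSucc, Fin.val_mk]; omega
      rw [e1, e2, e3, e4] at hc
      rw [hy'pos i.castSucc hcs]
      exact hc
  have hz' : (∑ i, ν i • y' i) ∈
      metricLinComb ν (fun i => (G i.castSucc : Set (EuclideanSpace ℝ (Fin d)))) :=
    ⟨y', hy'mem, hy'chain, rfl⟩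
  refine le_trans (Metric.infDist_le_dist_of_mem hz') ?_
  rw [dist_eq_norm, ← Finset.sum_sub_distrib]
  refine le_trans (norm_sum_le _ _) (Finset.sum_le_sum ?_)
  intro i _
  have key : μ i • y i - ν i • y' i = μ i • (y i - y' i) + (μ i - ν i) • y' i := by module
  rw [key]
  refine le_trans (norm_add_le _ _) (add_le_add ?_ ?_)
  · rw [norm_smul, Real.norm_eq_abs]
    refine mul_le_mul_of_nonneg_left ?_ (abs_nonneg _)
    rw [← dist_eq_norm, dist_comm]
    calc dist (y' i) (y i)
        ≤ Metric.hausdorffDist (G i.castSucc : Set (EuclideanSpace ℝ (Fin d)))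
            (G i.succ : Set (EuclideanSpace ℝ (Fin d))) :=
          (hpair i).dist_le_hausdorffDist (NEC_hausdorffEdist_ne_top _ _)
      _ = dist (G i.castSucc) (G i.succ) := (Metric.NonemptyCompacts.dist_eq).symm
  · rw [norm_smul, Real.norm_eq_abs]
    exact mul_le_mul_of_nonneg_left (hM _ _ (hy'mem i)) (abs_nonneg _)

lemma key_left {d n : ℕ}
    (G : Fin (n+2) → TopologicalSpace.NonemptyCompacts (EuclideanSpace ℝ (Fin d)))
    (μ ν : Fin (n+1) → ℝ) (M : ℝ)
    (hM : ∀ j, ∀ p ∈ (G j : Set (EuclideanSpace ℝ (Fin d))), ‖p‖ ≤ M)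
    {z : EuclideanSpace ℝ (Fin d)}
    (hz : z ∈ metricLinComb ν (fun i => (G i.castSucc : Set (EuclideanSpace ℝ (Fin d))))) :
    Metric.infDist z
        (metricLinComb μ (fun i => (G i.succ : Set (EuclideanSpace ℝ (Fin d))))) ≤
      ∑ i, (|ν i| * dist (G i.castSucc) (G i.succ) + |μ i - ν i| * M) := by
  obtain ⟨y, hymem, hychain, rfl⟩ := hz
  simp only at hymem hychain
  obtain ⟨q, hqmem, hqdist⟩ :=
    (G (Fin.last (n+1))).isCompact.exists_infDist_eq_dist
      (G (Fin.last (n+1))).nonempty (y (Fin.last n))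
  set y' : Fin (n+1) → EuclideanSpace ℝ (Fin d) :=
    fun i => if h : (i : ℕ) = n then q
      else y ⟨(i : ℕ) + 1, by have := i.isLt; omega⟩ with hy'
  have hy'last : ∀ i : Fin (n+1), (i : ℕ) = n → y' i = q := by
    intro i hi; simp only [hy', hi, dif_pos]
  have hy'pos : ∀ (i : Fin (n+1)) (hi : (i : ℕ) ≠ n),
      y' i = y ⟨(i : ℕ) + 1, by have := i.isLt; omega⟩ := by
    intro i hi; simp only [hy']; rw [dif_neg hi]
  have hy'mem : ∀ i : Fin (n+1), y' i ∈ (G i.succ : Set (EuclideanSpace ℝ (Fin d))) := by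
    intro i
    by_cases hi : (i : ℕ) = n
    · rw [hy'last i hi]
      have e : i.succ = Fin.last (n+1) := by
        apply Fin.ext; simp only [Fin.val_succ, Fin.val_last]; omega
      rw [e]; exact hqmem
    · rw [hy'pos i hi]
      have e : (⟨(i : ℕ) + 1, by have := i.isLt; omega⟩ : Fin (n+1)).castSucc = i.succ := by
        apply Fin.ext; simp only [Fin.val_succ, Fin.coe_castSucc, Fin.val_mk]
      rw [← e]; exact hymem _
  have hpair : ∀ i : Fin (n+1),
      IsMetricPair (G i.castSucc : Set (EuclideanSpace ℝ (Fin d)))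
        (G i.succ : Set (EuclideanSpace ℝ (Fin d))) (y i) (y' i) := by
    intro i
    by_cases hi : (i : ℕ) = n
    · have e : i = Fin.last n := by apply Fin.ext; simpa using hi
      subst e
      rw [hy'last _ (by simp)]
      have e' : (Fin.last n).succ = Fin.last (n+1) := by
        apply Fin.ext; simp only [Fin.val_succ, Fin.val_last]
      rw [e']
      exact ⟨hymem _, hqmem, Or.inr hqdist.symm⟩
    · have hn : (i : ℕ) < n := by have := i.isLt; omega
      set j : Fin n := ⟨(i : ℕ), hn⟩ with hj
      have hc := hychain j
      have e1 : j.castSucc.castSucc = i.castSucc := by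
        apply Fin.ext; simp only [hj, Fin.coe_castSucc, Fin.val_mk]
      have e2 : j.succ.castSucc = i.succ := by
        apply Fin.ext; simp only [hj, Fin.val_succ, Fin.coe_castSucc, Fin.val_mk]
      have e3 : j.castSucc = i := by
        apply Fin.ext; simp only [hj, Fin.coe_castSucc, Fin.val_mk]
      have e4 : j.succ = (⟨(i : ℕ) + 1, by have := i.isLt; omega⟩ : Fin (n+1)) := by
        apply Fin.ext; simp only [hj, Fin.val_succ, Fin.val_mk]
      rw [e1, e2, e3, e4] at hc
      rw [hy'pos i hi]
      exact hc
  have hcast : ∀ i : Fin n, y' i.castSucc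
      = y ⟨((i.castSucc : Fin (n+1)) : ℕ) + 1,
          by have h1 := i.isLt; have h2 : ((i.castSucc : Fin (n+1)) : ℕ) = (i : ℕ) := rfl; omega⟩ := by
    intro i
    exact hy'pos i.castSucc (by simp only [Fin.coe_castSucc]; have := i.isLt; omega)
  have hy'chain : ∀ i : Fin n,
      IsMetricPair (G i.castSucc.succ : Set (EuclideanSpace ℝ (Fin d)))
        (G i.succ.succ : Set (EuclideanSpace ℝ (Fin d))) (y' i.castSucc) (y' i.succ) := by
    intro i
    rw [hcast i]
    by_cases hi : (i : ℕ) + 1 = n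
    · rw [hy'last i.succ (by simp only [Fin.val_succ]; omega)]
      have e0 : (⟨((i.castSucc : Fin (n+1)) : ℕ) + 1,
          by have h1 := i.isLt; have h2 : ((i.castSucc : Fin (n+1)) : ℕ) = (i : ℕ) := rfl; omega⟩ : Fin (n+1)) = Fin.last n := by
        apply Fin.ext; simp only [Fin.coe_castSucc, Fin.val_mk, Fin.val_last]; omega
      have e1 : i.castSucc.succ = (Fin.last n).castSucc := by
        apply Fin.ext; simp only [Fin.val_succ, Fin.coe_castSucc, Fin.val_last]; omega
      have e2 : i.succ.succ = Fin.last (n+1) := by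
        apply Fin.ext; simp only [Fin.val_succ, Fin.val_last]; omega
      rw [e0, e1, e2]
      exact ⟨hymem _, hqmem, Or.inr hqdist.symm⟩
    · have hn : (i : ℕ) + 1 < n := by have := i.isLt; omega
      set j : Fin n := ⟨(i : ℕ) + 1, hn⟩ with hj
      have hc := hychain j
      have e1 : j.castSucc.castSucc = i.castSucc.succ := by
        apply Fin.ext; simp only [hj, Fin.val_succ, Fin.coe_castSucc, Fin.val_mk]
      have e2 : j.succ.castSucc = i.succ.succ := by
        apply Fin.ext; simp only [hj, Fin.val_succ, Fin.coe_castSucc, Fin.val_mk]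
      have e3 : j.castSucc = (⟨((i.castSucc : Fin (n+1)) : ℕ) + 1,
          by have h1 := i.isLt; have h2 : ((i.castSucc : Fin (n+1)) : ℕ) = (i : ℕ) := rfl; omega⟩ : Fin (n+1)) := by
        apply Fin.ext; simp only [hj, Fin.coe_castSucc, Fin.val_mk]
      have e4 : j.succ = (⟨((i.succ : Fin (n+1)) : ℕ) + 1,
          by have h1 := i.isLt; have h2 : ((i.succ : Fin (n+1)) : ℕ) = (i : ℕ) + 1 := rfl; omega⟩ : Fin (n+1)) := by
        apply Fin.ext; simp only [hj, Fin.val_succ, Fin.val_mk]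
      rw [e1, e2, e3, e4] at hc
      rw [hy'pos i.succ (by simp only [Fin.val_succ]; omega)]
      exact hc
  have hz' : (∑ i, μ i • y' i) ∈
      metricLinComb μ (fun i => (G i.succ : Set (EuclideanSpace ℝ (Fin d)))) :=
    ⟨y', hy'mem, hy'chain, rfl⟩
  refine le_trans (Metric.infDist_le_dist_of_mem hz') ?_
  rw [dist_eq_norm, ← Finset.sum_sub_distrib]
  refine le_trans (norm_sum_le _ _) (Finset.sum_le_sum ?_)
  intro i _
  have key : ν i • y i - μ i • y' i = ν i • (y i - y' i) + (ν i - μ i) • y' i := by module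
  rw [key]
  refine le_trans (norm_add_le _ _) (add_le_add ?_ ?_)
  · rw [norm_smul, Real.norm_eq_abs]
    refine mul_le_mul_of_nonneg_left ?_ (abs_nonneg _)
    rw [← dist_eq_norm]
    calc dist (y i) (y' i)
        ≤ Metric.hausdorffDist (G i.castSucc : Set (EuclideanSpace ℝ (Fin d)))
            (G i.succ : Set (EuclideanSpace ℝ (Fin d))) :=
          (hpair i).dist_le_hausdorffDist (NEC_hausdorffEdist_ne_top _ _)
      _ = dist (G i.castSucc) (G i.succ) := (Metric.NonemptyCompacts.dist_eq).symm
  · rw [norm_smul, Real.norm_eq_abs, abs_sub_comm]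
    exact mul_le_mul_of_nonneg_left (hM _ _ (hy'mem i)) (abs_nonneg _)

/-- For BV data `F : [a,b] → K(ℝ^d)` (nonempty compact values, variation in the
Hausdorff metric) and `k : [a,b] → ℝ`, and any partition `a = x_0 < ⋯ < x_{n+1} = b`
with mesh at most `h`, the Hausdorff distance between the right weighted metric Riemann
sum `⊕ (x_{i+1}−x_i) k(x_{i+1}) F(x_{i+1})` and the left weighted metric Riemann sum
`⊕ (x_{i+1}−x_i) k(x_i) F(x_i)` is at most `h (‖k‖_∞ V_a^b(F) + ‖F‖_∞ V_a^b(k))`. -/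
theorem hausdorffDist_weighted_metric_riemann_sums {d : ℕ}
    (a b : ℝ) (hab : a < b)
    (F : ℝ → TopologicalSpace.NonemptyCompacts (EuclideanSpace ℝ (Fin d)))
    (k : ℝ → ℝ)
    (hF : BoundedVariationOn F (Set.Icc a b))
    (hk : BoundedVariationOn k (Set.Icc a b))
    (MF Mk : ℝ)
    (hMF : ∀ x ∈ Set.Icc a b, ∀ y ∈ (F x : Set (EuclideanSpace ℝ (Fin d))), ‖y‖ ≤ MF)
    (hMk : ∀ x ∈ Set.Icc a b, |k x| ≤ Mk)
    (n : ℕ) (x : Fin (n+2) → ℝ) (hmono : StrictMono x)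
    (hxa : x 0 = a) (hxb : x (Fin.last (n+1)) = b)
    (h : ℝ) (hmesh : ∀ i : Fin (n+1), x i.succ - x i.castSucc ≤ h) :
    Metric.hausdorffDist
      (metricLinComb (fun i : Fin (n+1) => (x i.succ - x i.castSucc) * k (x i.succ))
        (fun i : Fin (n+1) => (F (x i.succ) : Set (EuclideanSpace ℝ (Fin d)))))
      (metricLinComb (fun i : Fin (n+1) => (x i.succ - x i.castSucc) * k (x i.castSucc))
        (fun i : Fin (n+1) => (F (x i.castSucc) : Set (EuclideanSpace ℝ (Fin d)))))
      ≤ h * (Mk * (eVariationOn F (Set.Icc a b)).toReal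
              + MF * (eVariationOn k (Set.Icc a b)).toReal) := by
  have hxm : Monotone x := hmono.monotone
  have hmem : ∀ j : Fin (n+2), x j ∈ Set.Icc a b := fun j =>
    ⟨hxa ▸ hxm (Fin.zero_le j), hxb ▸ hxm (Fin.le_last j)⟩
  have hMF0 : 0 ≤ MF := by
    obtain ⟨w, hw⟩ := (F a).nonempty
    exact le_trans (norm_nonneg w) (hMF a ⟨le_refl a, hab.le⟩ w hw)
  have hMk0 : 0 ≤ Mk := le_trans (abs_nonneg _) (hMk a ⟨le_refl a, hab.le⟩)
  have hΔpos : ∀ i : Fin (n+1), 0 < x i.succ - x i.castSucc :=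
    fun i => sub_pos.mpr (hmono (Fin.castSucc_lt_succ (i := i)))
  have hh0 : 0 ≤ h := le_trans (hΔpos 0).le (hmesh 0)
  set VF := (eVariationOn F (Set.Icc a b)).toReal with hVF
  set Vk := (eVariationOn k (Set.Icc a b)).toReal with hVk
  set μ : Fin (n+1) → ℝ :=
    fun i => (x i.succ - x i.castSucc) * k (x i.succ) with hμ
  set ν : Fin (n+1) → ℝ :=
    fun i => (x i.succ - x i.castSucc) * k (x i.castSucc) with hν
  have hμb : ∀ i, |μ i| ≤ h * Mk := by
    intro i
    rw [hμ]
    simp only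
    rw [abs_mul, abs_of_pos (hΔpos i)]
    exact mul_le_mul (hmesh i) (hMk _ (hmem _)) (abs_nonneg _) hh0
  have hνb : ∀ i, |ν i| ≤ h * Mk := by
    intro i
    rw [hν]
    simp only
    rw [abs_mul, abs_of_pos (hΔpos i)]
    exact mul_le_mul (hmesh i) (hMk _ (hmem _)) (abs_nonneg _) hh0
  have hδ : ∀ i, |μ i - ν i| ≤ h * dist (k (x i.castSucc)) (k (x i.succ)) := by
    intro i
    rw [hμ, hν]
    simp only
    rw [← mul_sub, abs_mul, abs_of_pos (hΔpos i), dist_comm, Real.dist_eq]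
    exact mul_le_mul_of_nonneg_right (hmesh i) (abs_nonneg _)
  have SF : ∑ i : Fin (n+1), dist (F (x i.castSucc)) (F (x i.succ)) ≤ VF :=
    sum_dist_le_variation F hF x hxm hxa hxb hab.le
  have Sk : ∑ i : Fin (n+1), dist (k (x i.castSucc)) (k (x i.succ)) ≤ Vk :=
    sum_dist_le_variation k hk x hxm hxa hxb hab.le
  have hsum : ∀ w : Fin (n+1) → ℝ, (∀ i, |w i| ≤ h * Mk) →
      ∑ i : Fin (n+1), (|w i| * dist (F (x i.castSucc)) (F (x i.succ)) + |μ i - ν i| * MF)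
        ≤ h * (Mk * VF + MF * Vk) := by
    intro w hw
    calc ∑ i : Fin (n+1),
          (|w i| * dist (F (x i.castSucc)) (F (x i.succ)) + |μ i - ν i| * MF)
        ≤ ∑ i : Fin (n+1), ((h * Mk) * dist (F (x i.castSucc)) (F (x i.succ))
            + (h * MF) * dist (k (x i.castSucc)) (k (x i.succ))) := by
          refine Finset.sum_le_sum fun i _ => add_le_add ?_ ?_
          · exact mul_le_mul_of_nonneg_right (hw i) dist_nonneg
          · calc |μ i - ν i| * MF
                ≤ (h * dist (k (x i.castSucc)) (k (x i.succ))) * MF :=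
                  mul_le_mul_of_nonneg_right (hδ i) hMF0
              _ = (h * MF) * dist (k (x i.castSucc)) (k (x i.succ)) := by ring
      _ = (h * Mk) * (∑ i : Fin (n+1), dist (F (x i.castSucc)) (F (x i.succ)))
            + (h * MF) * (∑ i : Fin (n+1), dist (k (x i.castSucc)) (k (x i.succ))) := by
          rw [Finset.sum_add_distrib, Finset.mul_sum, Finset.mul_sum]
      _ ≤ (h * Mk) * VF + (h * MF) * Vk :=
          add_le_add (mul_le_mul_of_nonneg_left SF (mul_nonneg hh0 hMk0))
            (mul_le_mul_of_nonneg_left Sk (mul_nonneg hh0 hMF0))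
      _ = h * (Mk * VF + MF * Vk) := by ring
  have hMbound : ∀ j : Fin (n+2), ∀ p ∈ ((fun j : Fin (n+2) => F (x j)) j :
      Set (EuclideanSpace ℝ (Fin d))), ‖p‖ ≤ MF := fun j p hp => hMF (x j) (hmem j) p hp
  have hr0 : 0 ≤ h * (Mk * VF + MF * Vk) :=
    mul_nonneg hh0 (add_nonneg (mul_nonneg hMk0 ENNReal.toReal_nonneg)
      (mul_nonneg hMF0 ENNReal.toReal_nonneg))
  refine Metric.hausdorffDist_le_of_infDist hr0 (fun z hz => ?_) (fun z hz => ?_)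
  · exact le_trans (key_right (fun j : Fin (n+2) => F (x j)) μ ν MF hMbound hz) (hsum μ hμb)
  · exact le_trans (key_left (fun j : Fin (n+2) => F (x j)) μ ν MF hMbound hz) (hsum ν hνb)
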